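/- Analyticity. For each 0 ≤ a ≤ b ≤ 1 and each integer n ≥ 0, the function k ↦ S_n^{(a,b)}(k) is entire (holomorphic on all of ℂ), and the series ∑_{n=0}^{∞} S_n^{(a,b)}(k) converges uniformly on compact subsets of ℂ; consequently Δ : ℂ → ℂ is an entire function. -/

import Mathlib

open MeasureTheory Filter

noncomputable section

/-- Nodes of the simplex: `y₀ = a`, `y_{n+1} = b`, interior nodes from `y`. -/
def nodes (a b : ℝ) (n : ℕ) (y : Fin n → ℝ) (p : ℕ) : ℝ :=
  if h : 1 ≤ p ∧ p ≤ n then y ⟨p - 1, by omega⟩ else if p = 0 then a else b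

/-- The ordered simplex `a ≤ y₁ ≤ ⋯ ≤ y_n ≤ b`. -/
def simplex (a b : ℝ) (n : ℕ) : Set (Fin n → ℝ) :=
  {y | Monotone y ∧ ∀ i, y i ∈ Set.Icc a b}

/-- The alternating phase `∑_{p=0}^{n} (−1)^p ∫_{y_p}^{y_{p+1}} dξ/σ(ξ)`. -/
def phase (σ : ℝ → ℝ) (a b : ℝ) (n : ℕ) (y : Fin n → ℝ) : ℝ :=
  ∑ p ∈ Finset.range (n + 1),
    (-1 : ℝ) ^ p * ∫ ξ in (nodes a b n y p)..(nodes a b n y (p + 1)), 1 / σ ξ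

/-- The integrand defining `S_n^{(a,b)}(k)`. -/
def Sintegrand (σ : ℝ → ℝ) (a b : ℝ) (n : ℕ) (k : ℂ) (y : Fin n → ℝ) : ℂ :=
  ((∏ p, deriv σ (y p) / σ (y p) : ℝ) : ℂ) * Complex.sin (k * ((phase σ a b n y : ℝ) : ℂ))

/-- `S_n^{(a,b)}(k)`. -/
def S (σ : ℝ → ℝ) (a b : ℝ) (n : ℕ) (k : ℂ) : ℂ :=
  ((2 : ℂ) ^ n)⁻¹ * ∫ y in simplex a b n, Sintegrand σ a b n k y

/-- `Δ(k) = ∑_{n=0}^∞ S_n^{(0,1)}(k)`. -/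
def Δfun (σ : ℝ → ℝ) (k : ℂ) : ℂ := ∑' n, S σ 0 1 n k

/-- `σ` is absolutely continuous on `[0,1]`: fundamental-theorem-of-calculus
characterization with integrable derivative. -/
def sigmaAC (σ : ℝ → ℝ) : Prop :=
  IntegrableOn (deriv σ) (Set.Icc 0 1) ∧
    ∀ x ∈ Set.Icc (0 : ℝ) 1, σ x = σ 0 + ∫ t in (0 : ℝ)..x, deriv σ t

namespace Stmt14

lemma isClosed_mono {n : ℕ} : IsClosed {y : Fin n → ℝ | Monotone y} := by
  have h : {y : Fin n → ℝ | Monotone y} =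
      ⋂ (p : Fin n × Fin n) (_ : p.1 ≤ p.2), {y : Fin n → ℝ | y p.1 ≤ y p.2} := by
    ext y
    simp only [Set.mem_setOf_eq, Set.mem_iInter]
    exact ⟨fun h p hp => h hp, fun h i j hij => h (i, j) hij⟩
  rw [h]
  exact isClosed_iInter fun p => isClosed_iInter fun _ =>
    isClosed_le (continuous_apply p.1) (continuous_apply p.2)

lemma perm_eq_of_monotone {n : ℕ} {y : Fin n → ℝ} (hy : Function.Injective y)
    {τ₁ τ₂ : Equiv.Perm (Fin n)} (h1 : Monotone (y ∘ τ₁)) (h2 : Monotone (y ∘ τ₂)) :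
    τ₁ = τ₂ := by
  have s1 : StrictMono (y ∘ τ₁) := h1.strictMono_of_injective (hy.comp τ₁.injective)
  have s2 : StrictMono (y ∘ τ₂) := h2.strictMono_of_injective (hy.comp τ₂.injective)
  have hπ : StrictMono (fun i => τ₂.symm (τ₁ i)) := by
    intro i j hij
    have h := s1 hij
    have e1 : (y ∘ τ₁) i = (y ∘ τ₂) (τ₂.symm (τ₁ i)) := by simp
    have e2 : (y ∘ τ₁) j = (y ∘ τ₂) (τ₂.symm (τ₁ j)) := by simp
    rw [e1, e2] at h
    exact s2.lt_iff_lt.mp h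
  have hr : Set.range (fun i => τ₂.symm (τ₁ i)) = Set.range (id : Fin n → Fin n) := by
    rw [Set.range_id]
    exact Set.range_eq_univ.mpr ((τ₂.symm.surjective).comp τ₁.surjective)
  have hid : (fun i => τ₂.symm (τ₁ i)) = id :=
    ((@StrictMono.range_inj (Fin n) (Fin n) _ _ (inferInstance : WellFoundedLT (Fin n)) _ _
      hπ strictMono_id)).mp hr
  refine Equiv.ext fun i => ?_
  have := congrFun hid i
  simp only [id_eq] at this
  exact (Equiv.symm_apply_eq τ₂).mp this

lemma volume_hyper {n : ℕ} {i j : Fin n} (hij : i ≠ j) :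
    volume {y : Fin n → ℝ | y i = y j} = 0 := by
  have hset : {y : Fin n → ℝ | y i = y j} =
      (LinearMap.ker ((LinearMap.proj i : (Fin n → ℝ) →ₗ[ℝ] ℝ) - LinearMap.proj j) : Set (Fin n → ℝ)) := by
    ext y
    simp [LinearMap.mem_ker, sub_eq_zero]
  rw [hset]
  refine Measure.addHaar_submodule _ _ ?_
  intro htop
  have h1 : (Pi.single i 1 : Fin n → ℝ) ∈
      LinearMap.ker ((LinearMap.proj i : (Fin n → ℝ) →ₗ[ℝ] ℝ) - LinearMap.proj j) := by
    rw [htop]; trivial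
  rw [LinearMap.mem_ker] at h1
  simp only [LinearMap.sub_apply, LinearMap.proj_apply] at h1
  rw [Pi.single_eq_same, Pi.single_eq_of_ne (Ne.symm hij)] at h1
  norm_num at h1

lemma volume_ne_injective {n : ℕ} :
    volume {y : Fin n → ℝ | ¬ Function.Injective y} = 0 := by
  have hsub : {y : Fin n → ℝ | ¬ Function.Injective y} ⊆
      ⋃ (p : Fin n × Fin n) (_ : p.1 ≠ p.2), {y : Fin n → ℝ | y p.1 = y p.2} := by
    intro y hy
    simp only [Set.mem_setOf_eq, Function.Injective, not_forall] at hy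
    obtain ⟨i, j, hval, hne⟩ := hy
    exact Set.mem_iUnion₂.mpr ⟨(i, j), hne, hval⟩
  exact measure_mono_null hsub
    (measure_iUnion_null fun p => measure_iUnion_null fun hp => volume_hyper hp)


theorem simplex_prod_bound {a b : ℝ} (n : ℕ) (g : ℝ → ℝ) (hg0 : ∀ t, 0 ≤ g t)
    (hgm : Measurable g) (hgi : Integrable g)
    (hsupp : ∀ t, t ∉ Set.Icc a b → g t = 0) :
    IntegrableOn (fun y : Fin n → ℝ => ∏ p, g (y p)) (simplex a b n) ∧
      ∫ y in simplex a b n, ∏ p, g (y p) ≤ (∫ t, g t) ^ n / n.factorial := by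
  set F : (Fin n → ℝ) → ℝ := fun y => ∏ p, g (y p) with hF
  have hFi : Integrable F := Integrable.fintype_prod (f := fun _ : Fin n => g) (fun _ => hgi)
  have hF0 : ∀ y, 0 ≤ F y := fun y => Finset.prod_nonneg fun p _ => hg0 _
  set M : Equiv.Perm (Fin n) → Set (Fin n → ℝ) := fun τ => {y | Monotone (y ∘ τ)} with hM
  have hMc : ∀ τ, IsClosed (M τ) := by
    intro τ
    have h : M τ = (fun y : Fin n → ℝ => y ∘ τ) ⁻¹' {y | Monotone y} := rfl
    rw [h]
    exact isClosed_mono.preimage (continuous_pi fun p => continuous_apply _)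
  have hMm : ∀ τ, MeasurableSet (M τ) := fun τ => (hMc τ).measurableSet
  -- each permuted monotone set has the same integral
  have key : ∀ τ : Equiv.Perm (Fin n), ∫ y in M τ, F y = ∫ y in M 1, F y := by
    intro τ
    set T := MeasurableEquiv.piCongrLeft (fun _ : Fin n => ℝ) (τ : Fin n ≃ Fin n) with hT
    have hmp : MeasurePreserving T volume volume :=
      volume_measurePreserving_piCongrLeft _ τ
    have hemb := T.measurableEmbedding
    have happ : ∀ (x : Fin n → ℝ) (i : Fin n), T x (τ i) = x i := by
      intro x i
      rw [hT, MeasurableEquiv.coe_piCongrLeft]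
      exact Equiv.piCongrLeft_apply_apply (fun _ : Fin n => ℝ) τ x i
    have h1 := hmp.setIntegral_preimage_emb hemb F (M τ)
    have hpre : (⇑T) ⁻¹' (M τ) = M 1 := by
      ext x
      have hc : (T x) ∘ τ = x := funext fun i => happ x i
      simp only [Set.mem_preimage, hM, Set.mem_setOf_eq, hc, Equiv.Perm.coe_one,
        Function.comp_id, CompTriple.comp_eq]
    have hFT : ∀ x, F (T x) = F x := by
      intro x
      simp only [hF]
      rw [← Equiv.prod_comp τ (fun p => g (T x p))]
      exact Finset.prod_congr rfl fun i _ => by rw [happ]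
    calc ∫ y in M τ, F y = ∫ x in (⇑T) ⁻¹' (M τ), F (T x) := h1.symm
      _ = ∫ x in M 1, F (T x) := by rw [hpre]
      _ = ∫ x in M 1, F x := by simp_rw [hFT]
  -- sum over permutations is at most the whole integral
  have hsum : ∑ τ : Equiv.Perm (Fin n), ∫ y in M τ, F y ≤ ∫ y, F y := by
    have hind : ∀ τ : Equiv.Perm (Fin n), ∫ y in M τ, F y = ∫ y, (M τ).indicator F y :=
      fun τ => (integral_indicator (hMm τ)).symm
    have haemono : ∀ᵐ y : Fin n → ℝ, ∑ τ : Equiv.Perm (Fin n), (M τ).indicator F y ≤ F y := by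
      have hainj : ∀ᵐ y : Fin n → ℝ, Function.Injective y := by
        rw [ae_iff]
        exact volume_ne_injective
      filter_upwards [hainj] with y hy
      by_cases hex : ∃ τ : Equiv.Perm (Fin n), y ∈ M τ
      · obtain ⟨τ₀, hτ₀⟩ := hex
        rw [Finset.sum_eq_single_of_mem τ₀ (Finset.mem_univ _)]
        · rw [Set.indicator_of_mem hτ₀]
        · intro τ _ hne
          rw [Set.indicator_of_notMem]
          intro hmem
          exact hne (perm_eq_of_monotone hy hmem hτ₀)
      · push_neg at hex
        have : ∀ τ : Equiv.Perm (Fin n), (M τ).indicator F y = 0 :=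
          fun τ => Set.indicator_of_notMem (hex τ) F
        simp only [this, Finset.sum_const_zero]
        exact hF0 y
    calc ∑ τ : Equiv.Perm (Fin n), ∫ y in M τ, F y
        = ∫ y, ∑ τ : Equiv.Perm (Fin n), (M τ).indicator F y := by
          rw [integral_finset_sum _ (fun τ _ => hFi.indicator (hMm τ))]
          exact Finset.sum_congr rfl fun τ _ => hind τ
      _ ≤ ∫ y, F y := by
          refine integral_mono_ae (integrable_finset_sum _ (fun τ _ => hFi.indicator (hMm τ)))
            hFi haemono
  -- relate simplex to M 1
  set cube : Set (Fin n → ℝ) := Set.univ.pi (fun _ : Fin n => Set.Icc a b) with hcube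
  have hcubem : MeasurableSet cube := MeasurableSet.univ_pi fun _ => measurableSet_Icc
  have hMS : M 1 ∩ cube = simplex a b n := by
    ext y
    simp only [hM, Set.mem_inter_iff, Set.mem_setOf_eq, Equiv.Perm.coe_one, Function.comp_id,
      hcube, Set.mem_pi, Set.mem_univ, forall_true_left, simplex, CompTriple.comp_eq]
  have hFind : ∀ y, cube.indicator F y = F y := by
    intro y
    by_cases h : y ∈ cube
    · rw [Set.indicator_of_mem h]
    · rw [Set.indicator_of_notMem h]
      symm
      obtain ⟨p, hp⟩ : ∃ p : Fin n, y p ∉ Set.Icc a b := by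
        by_contra hcon
        push_neg at hcon
        exact h fun i _ => hcon i
      exact Finset.prod_eq_zero (Finset.mem_univ p) (hsupp _ hp)
  have hMint : ∫ y in M 1, F y = ∫ y in simplex a b n, F y := by
    have h2 : ∫ y in M 1, F y = ∫ y in M 1, cube.indicator F y :=
      integral_congr_ae (Eventually.of_forall fun y => (hFind y).symm)
    rw [h2, setIntegral_indicator hcubem, hMS]
  have hfull : ∫ y, F y = (∫ t, g t) ^ n := by
    rw [hF]
    rw [MeasureTheory.integral_fintype_prod_volume_eq_pow (ι := Fin n) g, Fintype.card_fin]
  have hcount : (n.factorial : ℝ) * ∫ y in simplex a b n, F y ≤ (∫ t, g t) ^ n := by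
    have h1 : ∑ τ : Equiv.Perm (Fin n), ∫ y in M τ, F y
        = (n.factorial : ℝ) * ∫ y in simplex a b n, F y := by
      rw [Finset.sum_congr rfl (fun τ _ => key τ), Finset.sum_const, Finset.card_univ,
        Fintype.card_perm, Fintype.card_fin, nsmul_eq_mul, hMint]
    rw [← h1, ← hfull]
    exact hsum
  refine ⟨hFi.integrableOn, ?_⟩
  rw [le_div_iff₀ (by positivity : (0:ℝ) < (n.factorial : ℝ))]
  rw [mul_comm]
  exact hcount

/-- Norm of complex exponential bounded by exponential of the norm. -/
lemma norm_exp_le' (w : ℂ) : ‖Complex.exp w‖ ≤ Real.exp ‖w‖ := by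
  rw [Complex.norm_exp]
  exact Real.exp_le_exp.mpr (Complex.re_le_norm w)

lemma norm_sin_le' (z : ℂ) : ‖Complex.sin z‖ ≤ Real.exp ‖z‖ := by
  have h1 : ‖Complex.exp (-z * Complex.I)‖ ≤ Real.exp ‖z‖ := by
    refine (norm_exp_le' _).trans (Real.exp_le_exp.mpr ?_)
    rw [norm_mul]; simp
  have h2 : ‖Complex.exp (z * Complex.I)‖ ≤ Real.exp ‖z‖ := by
    refine (norm_exp_le' _).trans (Real.exp_le_exp.mpr ?_)
    rw [norm_mul]; simp
  rw [Complex.sin]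
  have hI : ‖Complex.I‖ = 1 := by simp
  rw [norm_div, norm_mul, hI, mul_one]
  have h2' : ‖(2:ℂ)‖ = 2 := by simp
  rw [h2']
  calc ‖Complex.exp (-z * Complex.I) - Complex.exp (z * Complex.I)‖ / 2
      ≤ (Real.exp ‖z‖ + Real.exp ‖z‖) / 2 := by
        gcongr
        exact (norm_sub_le _ _).trans (add_le_add h1 h2)
    _ = Real.exp ‖z‖ := by ring

lemma norm_cos_le' (z : ℂ) : ‖Complex.cos z‖ ≤ Real.exp ‖z‖ := by
  have h1 : ‖Complex.exp (-z * Complex.I)‖ ≤ Real.exp ‖z‖ := by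
    refine (norm_exp_le' _).trans (Real.exp_le_exp.mpr ?_)
    rw [norm_mul]; simp
  have h2 : ‖Complex.exp (z * Complex.I)‖ ≤ Real.exp ‖z‖ := by
    refine (norm_exp_le' _).trans (Real.exp_le_exp.mpr ?_)
    rw [norm_mul]; simp
  rw [Complex.cos]
  have h2' : ‖(2:ℂ)‖ = 2 := by simp
  rw [norm_div, h2']
  calc ‖Complex.exp (z * Complex.I) + Complex.exp (-z * Complex.I)‖ / 2
      ≤ (Real.exp ‖z‖ + Real.exp ‖z‖) / 2 := by
        gcongr
        exact (norm_add_le _ _).trans (add_le_add h2 h1)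
    _ = Real.exp ‖z‖ := by ring

/-- Continuous modification of `σ` defined via the integral of its derivative. -/
def sigt (σ : ℝ → ℝ) (t : ℝ) : ℝ := σ 0 + ∫ s in (0:ℝ)..(max 0 (min 1 t)), deriv σ s

lemma continuous_clamp01 : Continuous fun t : ℝ => max 0 (min 1 t) :=
  continuous_const.max (continuous_const.min continuous_id)

lemma clamp01_mem (t : ℝ) : max 0 (min 1 t) ∈ Set.Icc (0:ℝ) 1 :=
  ⟨le_max_left _ _, max_le zero_le_one (min_le_left _ _)⟩

lemma clamp01_eq {t : ℝ} (ht : t ∈ Set.Icc (0:ℝ) 1) : max 0 (min 1 t) = t := by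
  rw [min_eq_right ht.2, max_eq_right ht.1]

lemma sigt_cont {σ : ℝ → ℝ} (h : IntegrableOn (deriv σ) (Set.Icc 0 1)) :
    Continuous (sigt σ) := by
  have h1 : ContinuousOn (fun u => ∫ s in (0:ℝ)..u, deriv σ s) (Set.Icc 0 1) := by
    have h2 := intervalIntegral.continuousOn_primitive_interval
      (a := 0) (b := 1) (f := deriv σ) (μ := volume) (by rwa [Set.uIcc_of_le zero_le_one])
    rwa [Set.uIcc_of_le zero_le_one] at h2
  exact continuous_const.add (h1.comp_continuous continuous_clamp01 clamp01_mem)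

lemma sigt_eq {σ : ℝ → ℝ} (hσAC : sigmaAC σ) {x : ℝ} (hx : x ∈ Set.Icc (0:ℝ) 1) :
    σ x = sigt σ x := by
  rw [sigt, clamp01_eq hx]
  exact hσAC.2 x hx

lemma nodes_mem {a b : ℝ} (hab : a ≤ b) {n : ℕ} {y : Fin n → ℝ} (hy : y ∈ simplex a b n)
    (p : ℕ) : nodes a b n y p ∈ Set.Icc a b := by
  rw [nodes]
  split_ifs with h1 h2
  · exact hy.2 _
  · exact ⟨le_rfl, hab⟩
  · exact ⟨hab, le_rfl⟩

lemma continuous_nodes (a b : ℝ) (n : ℕ) (p : ℕ) :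
    Continuous fun y : Fin n → ℝ => nodes a b n y p := by
  by_cases h1 : 1 ≤ p ∧ p ≤ n
  · simp only [nodes, dif_pos h1]
    exact continuous_apply _
  · by_cases h2 : p = 0
    · simp only [nodes, dif_neg h1, if_pos h2]
      exact continuous_const
    · simp only [nodes, dif_neg h1, if_neg h2]
      exact continuous_const

lemma measurableSet_simplex {a b : ℝ} {n : ℕ} : MeasurableSet (simplex a b n) := by
  have h : simplex a b n =
      {y : Fin n → ℝ | Monotone y} ∩ ⋂ i, (fun y : Fin n → ℝ => y i) ⁻¹' Set.Icc a b := by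
    ext y
    simp [simplex, Set.mem_iInter]
  rw [h]
  exact isClosed_mono.measurableSet.inter
    (MeasurableSet.iInter fun i => (measurable_pi_apply i) measurableSet_Icc)

/-- Clamped primitive of `1 / sigt σ`. -/
def Hfun (σ : ℝ → ℝ) (a b : ℝ) (t : ℝ) : ℝ :=
  ∫ ξ in a..(max a (min b t)), 1 / sigt σ ξ

/-- Continuous version of the phase. -/
def phtld (σ : ℝ → ℝ) (a b : ℝ) (n : ℕ) (y : Fin n → ℝ) : ℝ :=
  ∑ p ∈ Finset.range (n + 1),
    (-1:ℝ)^p * (Hfun σ a b (nodes a b n y (p+1)) - Hfun σ a b (nodes a b n y p))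

lemma phtld_cont {σ : ℝ → ℝ} {a b : ℝ} (hH : Continuous (Hfun σ a b)) (n : ℕ) :
    Continuous (phtld σ a b n) := by
  refine continuous_finset_sum _ fun p _ => continuous_const.mul ?_
  exact (hH.comp (continuous_nodes a b n (p+1))).sub (hH.comp (continuous_nodes a b n p))


lemma main_ab (σ : ℝ → ℝ)
    (hσpos : ∀ x ∈ Set.Icc (0 : ℝ) 1, 0 < σ x)
    (hσAC : sigmaAC σ)
    (hratio : IntegrableOn (fun t => deriv σ t / σ t) (Set.Ioo 0 1))
    (a b : ℝ) (ha : 0 ≤ a) (hab : a ≤ b) (hb : b ≤ 1) :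
    (∀ n : ℕ, Differentiable ℂ (fun k => S σ a b n k)) ∧
      (∀ K : Set ℂ, IsCompact K →
        TendstoUniformlyOn (fun N k => ∑ n ∈ Finset.range N, S σ a b n k)
          (fun k => ∑' n, S σ a b n k) atTop K) := by
  classical
  have hsc : Continuous (sigt σ) := sigt_cont hσAC.1
  have hse : ∀ x ∈ Set.Icc (0:ℝ) 1, σ x = sigt σ x := fun x hx => sigt_eq hσAC hx
  have hsp : ∀ x ∈ Set.Icc (0:ℝ) 1, 0 < sigt σ x := fun x hx => (hse x hx) ▸ hσpos x hx
  obtain ⟨x₀, hx₀, hmin⟩ :=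
    isCompact_Icc.exists_isMinOn (Set.nonempty_Icc.mpr zero_le_one) hsc.continuousOn
  set m := sigt σ x₀ with hm
  have hm0 : 0 < m := hsp x₀ hx₀
  have hmle : ∀ x ∈ Set.Icc (0:ℝ) 1, m ≤ sigt σ x := fun x hx => isMinOn_iff.mp hmin x hx
  have hIccsub : Set.Icc a b ⊆ Set.Icc (0:ℝ) 1 := Set.Icc_subset_Icc ha hb
  -- dominating 1-dimensional function
  set g : ℝ → ℝ := (Set.Icc a b).indicator (fun t => |deriv σ t / sigt σ t|) with hgdef
  have hg0 : ∀ t, 0 ≤ g t := fun t => Set.indicator_nonneg (fun s _ => abs_nonneg _) t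
  have hgm : Measurable g :=
    (((measurable_deriv σ).div hsc.measurable).abs).indicator measurableSet_Icc
  have hgi : Integrable g := by
    rw [hgdef, integrable_indicator_iff measurableSet_Icc]
    have h1 : IntegrableOn (fun t => deriv σ t / sigt σ t) (Set.Ioo 0 1) := by
      refine hratio.congr_fun (fun t ht => ?_) measurableSet_Ioo
      dsimp only
      rw [hse t (Set.Ioo_subset_Icc_self ht)]
    have h2 : IntegrableOn (fun t => deriv σ t / sigt σ t) (Set.Icc 0 1) := by
      rw [IntegrableOn, ← Measure.restrict_congr_set Ioo_ae_eq_Icc]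
      exact h1
    exact (h2.mono_set hIccsub).abs
  have hgsupp : ∀ t, t ∉ Set.Icc a b → g t = 0 := fun t ht => Set.indicator_of_notMem ht _
  set Ig : ℝ := ∫ t, g t with hIgdef
  have hbnd := fun n => simplex_prod_bound (a := a) (b := b) n g hg0 hgm hgi hgsupp
  -- |product| = ∏ g on the simplex
  have hprod_abs : ∀ (n : ℕ) (y : Fin n → ℝ), y ∈ simplex a b n →
      |(∏ p, deriv σ (y p) / σ (y p))| = ∏ p, g (y p) := by
    intro n y hy
    rw [Finset.abs_prod]
    refine Finset.prod_congr rfl fun p _ => ?_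
    rw [hse (y p) (hIccsub (hy.2 p)), hgdef, Set.indicator_of_mem (hy.2 p)]
  -- phase bound
  have hphb : ∀ (n : ℕ) (y : Fin n → ℝ), y ∈ simplex a b n →
      |phase σ a b n y| ≤ ((n:ℝ)+1) * m⁻¹ := by
    intro n y hy
    rw [phase]
    refine (Finset.abs_sum_le_sum_abs _ _).trans ?_
    have hterm : ∀ p ∈ Finset.range (n+1),
        |(-1:ℝ)^p * ∫ ξ in (nodes a b n y p)..(nodes a b n y (p+1)), 1 / σ ξ| ≤ m⁻¹ := by
      intro p _
      rw [abs_mul, abs_pow, abs_neg, abs_one, one_pow, one_mul]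
      have hc := nodes_mem hab hy p
      have hd := nodes_mem hab hy (p+1)
      have hint : ∀ x ∈ Set.uIoc (nodes a b n y p) (nodes a b n y (p+1)), ‖1 / σ x‖ ≤ m⁻¹ := by
        intro x hx
        have hx' : x ∈ Set.Icc a b :=
          ⟨le_trans (le_min hc.1 hd.1) (le_of_lt hx.1), le_trans hx.2 (max_le hc.2 hd.2)⟩
        have hx'' := hIccsub hx'
        have hpos := hσpos x hx''
        rw [Real.norm_eq_abs, abs_of_pos (by positivity), one_div]
        refine inv_anti₀ hm0 ?_
        rw [hse x hx'']
        exact hmle x hx''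
      have h2 := intervalIntegral.norm_integral_le_of_norm_le_const hint
      rw [Real.norm_eq_abs] at h2
      refine h2.trans ?_
      have hdc : |nodes a b n y (p+1) - nodes a b n y p| ≤ 1 := by
        rw [abs_sub_le_iff]
        constructor
        · nlinarith [hc.1, hc.2, hd.1, hd.2]
        · nlinarith [hc.1, hc.2, hd.1, hd.2]
      calc m⁻¹ * |nodes a b n y (p+1) - nodes a b n y p| ≤ m⁻¹ * 1 :=
            mul_le_mul_of_nonneg_left hdc (by positivity)
        _ = m⁻¹ := mul_one _
    refine (Finset.sum_le_card_nsmul _ _ _ hterm).trans ?_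
    rw [Finset.card_range, nsmul_eq_mul]
    push_cast
    exact le_rfl
  -- Hfun facts
  have hinvc : ContinuousOn (fun ξ => 1 / sigt σ ξ) (Set.Icc a b) :=
    ContinuousOn.div continuousOn_const hsc.continuousOn fun x hx => (hsp x (hIccsub hx)).ne'
  have hHc : Continuous (Hfun σ a b) := by
    have h1 : ContinuousOn (fun u => ∫ ξ in a..u, 1 / sigt σ ξ) (Set.Icc a b) := by
      have h2 := intervalIntegral.continuousOn_primitive_interval
        (a := a) (b := b) (f := fun ξ => 1 / sigt σ ξ) (μ := volume)
        (by rw [Set.uIcc_of_le hab]; exact hinvc.integrableOn_Icc)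
      rwa [Set.uIcc_of_le hab] at h2
    have hclampc : Continuous fun t : ℝ => max a (min b t) :=
      continuous_const.max (continuous_const.min continuous_id)
    have hclampm : ∀ t, max a (min b t) ∈ Set.Icc a b :=
      fun t => ⟨le_max_left _ _, max_le hab (min_le_left _ _)⟩
    exact h1.comp_continuous hclampc hclampm
  have hIint : ∀ c d : ℝ, c ∈ Set.Icc a b → d ∈ Set.Icc a b →
      IntervalIntegrable (fun ξ => 1 / sigt σ ξ) volume c d := by
    intro c d hc hd
    exact (hinvc.mono (Set.uIcc_subset_Icc hc hd)).intervalIntegrable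
  have hHdiff : ∀ c d : ℝ, c ∈ Set.Icc a b → d ∈ Set.Icc a b →
      Hfun σ a b d - Hfun σ a b c = ∫ ξ in c..d, 1 / sigt σ ξ := by
    intro c d hc hd
    have hcc : max a (min b c) = c := by rw [min_eq_right hc.2, max_eq_right hc.1]
    have hdd : max a (min b d) = d := by rw [min_eq_right hd.2, max_eq_right hd.1]
    rw [Hfun, Hfun, hcc, hdd]
    exact intervalIntegral.integral_interval_sub_left
      (hIint a d ⟨le_rfl, hab⟩ hd) (hIint a c ⟨le_rfl, hab⟩ hc)
  -- phase = phtld on the simplex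
  have hphase_eq : ∀ (n : ℕ) (y : Fin n → ℝ), y ∈ simplex a b n →
      phase σ a b n y = phtld σ a b n y := by
    intro n y hy
    rw [phase, phtld]
    refine Finset.sum_congr rfl fun p _ => ?_
    have hc := nodes_mem hab hy p
    have hd := nodes_mem hab hy (p+1)
    congr 1
    rw [hHdiff _ _ hc hd]
    refine intervalIntegral.integral_congr fun x hx => ?_
    have hx' : x ∈ Set.Icc a b := Set.uIcc_subset_Icc hc hd hx
    rw [hse x (hIccsub hx')]
  -- measurability
  have hprod_meas : ∀ n : ℕ, Measurable fun y : Fin n → ℝ => ∏ p, deriv σ (y p) / sigt σ (y p) :=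
    fun n => Finset.measurable_prod _ fun p _ =>
      ((measurable_deriv σ).comp (measurable_pi_apply p)).div
        (hsc.measurable.comp (measurable_pi_apply p))
  have hprod_eq : ∀ (n : ℕ) (y : Fin n → ℝ), y ∈ simplex a b n →
      (∏ p, deriv σ (y p) / sigt σ (y p)) = ∏ p, deriv σ (y p) / σ (y p) :=
    fun n y hy => Finset.prod_congr rfl fun p _ => by rw [hse (y p) (hIccsub (hy.2 p))]
  have haesm : ∀ (n : ℕ) (k : ℂ), AEStronglyMeasurable (fun y => Sintegrand σ a b n k y)
      (volume.restrict (simplex a b n)) := by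
    intro n k
    have hTm : Measurable fun y : Fin n → ℝ =>
        (((∏ p, deriv σ (y p) / sigt σ (y p) : ℝ) : ℂ) *
          Complex.sin (k * ((phtld σ a b n y : ℝ) : ℂ))) := by
      refine Measurable.mul (Complex.measurable_ofReal.comp (hprod_meas n)) ?_
      exact Complex.continuous_sin.measurable.comp
        (measurable_const.mul (Complex.measurable_ofReal.comp (phtld_cont hHc n).measurable))
    refine hTm.aestronglyMeasurable.congr ?_
    refine ae_restrict_of_forall_mem measurableSet_simplex fun y hy => ?_
    simp only [Sintegrand, hprod_eq n y hy, hphase_eq n y hy]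
  have haesm' : ∀ (n : ℕ) (k : ℂ), AEStronglyMeasurable
      (fun y : Fin n → ℝ => (((∏ p, deriv σ (y p) / σ (y p) : ℝ)) : ℂ) *
        (Complex.cos (k * ((phase σ a b n y : ℝ) : ℂ)) * ((phase σ a b n y : ℝ) : ℂ)))
      (volume.restrict (simplex a b n)) := by
    intro n k
    have hTm : Measurable fun y : Fin n → ℝ =>
        (((∏ p, deriv σ (y p) / sigt σ (y p) : ℝ) : ℂ) *
          (Complex.cos (k * ((phtld σ a b n y : ℝ) : ℂ)) * ((phtld σ a b n y : ℝ) : ℂ))) := by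
      refine Measurable.mul (Complex.measurable_ofReal.comp (hprod_meas n)) ?_
      refine Measurable.mul ?_ (Complex.measurable_ofReal.comp (phtld_cont hHc n).measurable)
      exact Complex.continuous_cos.measurable.comp
        (measurable_const.mul (Complex.measurable_ofReal.comp (phtld_cont hHc n).measurable))
    refine hTm.aestronglyMeasurable.congr ?_
    refine ae_restrict_of_forall_mem measurableSet_simplex fun y hy => ?_
    simp only [hprod_eq n y hy, hphase_eq n y hy]
  -- pointwise bounds
  have hSbound : ∀ (n : ℕ) (k : ℂ) (y : Fin n → ℝ), y ∈ simplex a b n →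
      ‖Sintegrand σ a b n k y‖ ≤ (∏ p, g (y p)) * Real.exp (‖k‖ * (((n:ℝ)+1) * m⁻¹)) := by
    intro n k y hy
    rw [Sintegrand, norm_mul]
    have h1 : ‖((∏ p, deriv σ (y p) / σ (y p) : ℝ) : ℂ)‖ = ∏ p, g (y p) := by
      rw [Complex.norm_real, Real.norm_eq_abs, hprod_abs n y hy]
    rw [h1]
    refine mul_le_mul_of_nonneg_left ?_ (Finset.prod_nonneg fun p _ => hg0 _)
    refine (norm_sin_le' _).trans (Real.exp_le_exp.mpr ?_)
    rw [norm_mul, Complex.norm_real, Real.norm_eq_abs]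
    exact mul_le_mul_of_nonneg_left (hphb n y hy) (norm_nonneg k)
  have hF'bound : ∀ (n : ℕ) (k : ℂ) (y : Fin n → ℝ), y ∈ simplex a b n →
      ‖(((∏ p, deriv σ (y p) / σ (y p) : ℝ)) : ℂ) *
        (Complex.cos (k * ((phase σ a b n y : ℝ) : ℂ)) * ((phase σ a b n y : ℝ) : ℂ))‖ ≤
      (∏ p, g (y p)) * (Real.exp (‖k‖ * (((n:ℝ)+1) * m⁻¹)) * (((n:ℝ)+1) * m⁻¹)) := by
    intro n k y hy
    rw [norm_mul, norm_mul]
    have h1 : ‖((∏ p, deriv σ (y p) / σ (y p) : ℝ) : ℂ)‖ = ∏ p, g (y p) := by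
      rw [Complex.norm_real, Real.norm_eq_abs, hprod_abs n y hy]
    rw [h1]
    refine mul_le_mul_of_nonneg_left ?_ (Finset.prod_nonneg fun p _ => hg0 _)
    have hφ : ‖((phase σ a b n y : ℝ) : ℂ)‖ ≤ ((n:ℝ)+1) * m⁻¹ := by
      rw [Complex.norm_real, Real.norm_eq_abs]
      exact hphb n y hy
    refine mul_le_mul ?_ hφ (norm_nonneg _) (Real.exp_pos _).le
    refine (norm_cos_le' _).trans (Real.exp_le_exp.mpr ?_)
    rw [norm_mul, Complex.norm_real, Real.norm_eq_abs]
    exact mul_le_mul_of_nonneg_left (hphb n y hy) (norm_nonneg k)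
  -- integrability of the integrand
  have hInt : ∀ (n : ℕ) (k : ℂ), IntegrableOn (fun y => Sintegrand σ a b n k y)
      (simplex a b n) := by
    intro n k
    refine Integrable.mono'
      (((hbnd n).1).mul_const (Real.exp (‖k‖ * (((n:ℝ)+1) * m⁻¹)))) (haesm n k) ?_
    exact ae_restrict_of_forall_mem measurableSet_simplex fun y hy => hSbound n k y hy
  -- differentiability
  have hdiff : ∀ n : ℕ, Differentiable ℂ fun k => S σ a b n k := by
    intro n
    have hder : ∀ k₀ : ℂ, HasDerivAt
        (fun k => ∫ y in simplex a b n, Sintegrand σ a b n k y)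
        (∫ y in simplex a b n, (((∏ p, deriv σ (y p) / σ (y p) : ℝ)) : ℂ) *
          (Complex.cos (k₀ * ((phase σ a b n y : ℝ) : ℂ)) * ((phase σ a b n y : ℝ) : ℂ))) k₀ := by
      intro k₀
      have hres := hasDerivAt_integral_of_dominated_loc_of_deriv_le
        (F := fun k y => Sintegrand σ a b n k y)
        (F' := fun k (y : Fin n → ℝ) => (((∏ p, deriv σ (y p) / σ (y p) : ℝ)) : ℂ) *
          (Complex.cos (k * ((phase σ a b n y : ℝ) : ℂ)) * ((phase σ a b n y : ℝ) : ℂ)))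
        (x₀ := k₀) (s := Metric.ball k₀ 1)
        (bound := fun y => (∏ p, g (y p)) *
          (Real.exp ((‖k₀‖+1) * (((n:ℝ)+1) * m⁻¹)) * (((n:ℝ)+1) * m⁻¹)))
        (Metric.ball_mem_nhds k₀ one_pos)
        (Eventually.of_forall fun k => haesm n k)
        (hInt n k₀)
        (haesm' n k₀)
        ?_ ?_ ?_
      · exact hres.2
      · refine ae_restrict_of_forall_mem measurableSet_simplex fun y hy => fun k hk => ?_
        refine (hF'bound n k y hy).trans ?_
        have hknorm : ‖k‖ ≤ ‖k₀‖ + 1 := by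
          have h1 : dist k k₀ < 1 := Metric.mem_ball.mp hk
          calc ‖k‖ = ‖k₀ + (k - k₀)‖ := by ring_nf
            _ ≤ ‖k₀‖ + ‖k - k₀‖ := norm_add_le _ _
            _ ≤ ‖k₀‖ + 1 := by
                rw [← dist_eq_norm]
                linarith
        have hBn : (0:ℝ) ≤ ((n:ℝ)+1) * m⁻¹ := by positivity
        have hP : (0:ℝ) ≤ ∏ p, g (y p) := Finset.prod_nonneg fun p _ => hg0 _
        refine mul_le_mul_of_nonneg_left ?_ hP
        refine mul_le_mul_of_nonneg_right (Real.exp_le_exp.mpr ?_) hBn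
        exact mul_le_mul_of_nonneg_right hknorm hBn
      · exact ((hbnd n).1).mul_const _
      · refine Eventually.of_forall fun y => fun k hk => ?_
        have h1 : HasDerivAt (fun k : ℂ => Complex.sin (k * ((phase σ a b n y : ℝ) : ℂ)))
            (Complex.cos (k * ((phase σ a b n y : ℝ) : ℂ)) * ((phase σ a b n y : ℝ) : ℂ)) k := by
          have h2 : HasDerivAt (fun k : ℂ => k * ((phase σ a b n y : ℝ) : ℂ))
              ((phase σ a b n y : ℝ) : ℂ) k := hasDerivAt_mul_const _
          exact (Complex.hasDerivAt_sin _).comp k h2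
        exact h1.const_mul _
    intro k₀
    have h1 := ((hder k₀).differentiableAt).const_mul (((2:ℂ)^n)⁻¹)
    simpa [S] using h1
  refine ⟨hdiff, ?_⟩
  -- uniform convergence on compacts
  intro K hK
  obtain ⟨R, hR⟩ := isBounded_iff_forall_norm_le.mp hK.isBounded
  set R' := max R 0 with hR'def
  have hR'0 : (0:ℝ) ≤ R' := le_max_right _ _
  have hRK : ∀ k ∈ K, ‖k‖ ≤ R' := fun k hk => (hR k hk).trans (le_max_left _ _)
  set E : ℝ := Real.exp (R' * m⁻¹) with hEdef
  have hE0 : (0:ℝ) < E := Real.exp_pos _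
  have hIg0 : (0:ℝ) ≤ Ig := integral_nonneg hg0
  have hsummable : Summable (fun n : ℕ => E * ((2⁻¹ * E * Ig)^n / n.factorial)) :=
    (Real.summable_pow_div_factorial _).mul_left E
  refine tendstoUniformlyOn_tsum_nat hsummable ?_
  intro n k hk
  have hknorm : ‖k‖ ≤ R' := hRK k hk
  have hIS : ∫ y in simplex a b n, ∏ p, g (y p) ≤ Ig ^ n / n.factorial := (hbnd n).2
  have hISnonneg : (0:ℝ) ≤ ∫ y in simplex a b n, ∏ p, g (y p) :=
    setIntegral_nonneg measurableSet_simplex fun y _ => Finset.prod_nonneg fun p _ => hg0 _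
  have hexp : Real.exp (‖k‖ * (((n:ℝ)+1) * m⁻¹)) ≤ E ^ (n+1) := by
    rw [hEdef, ← Real.exp_nat_mul]
    refine Real.exp_le_exp.mpr ?_
    push_cast
    have hminv : (0:ℝ) ≤ m⁻¹ := by positivity
    nlinarith [mul_le_mul_of_nonneg_right hknorm (mul_nonneg (by positivity : (0:ℝ) ≤ (n:ℝ)+1) hminv)]
  have hnormS : ‖S σ a b n k‖ ≤
      (2:ℝ)⁻¹^n * ((∫ y in simplex a b n, ∏ p, g (y p)) *
        Real.exp (‖k‖ * (((n:ℝ)+1) * m⁻¹))) := by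
    rw [S, norm_mul]
    have hc : ‖((2:ℂ)^n)⁻¹‖ = (2:ℝ)⁻¹^n := by
      have h2 : ‖(2:ℂ)‖ = 2 := by norm_num
      rw [norm_inv, norm_pow, h2, ← inv_pow]
    rw [hc]
    refine mul_le_mul_of_nonneg_left ?_ (by positivity)
    refine (norm_integral_le_integral_norm _).trans ?_
    have h1 : ∫ y in simplex a b n, ‖Sintegrand σ a b n k y‖ ≤
        ∫ y in simplex a b n, (∏ p, g (y p)) * Real.exp (‖k‖ * (((n:ℝ)+1) * m⁻¹)) := by
      refine setIntegral_mono_on (hInt n k).norm (((hbnd n).1).mul_const _)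
        measurableSet_simplex fun y hy => hSbound n k y hy
    refine h1.trans ?_
    rw [integral_mul_const]
  refine hnormS.trans ?_
  have hfinal : (2:ℝ)⁻¹^n * ((Ig ^ n / n.factorial) * E ^ (n+1)) =
      E * ((2⁻¹ * E * Ig)^n / n.factorial) := by
    rw [mul_pow, mul_pow, pow_succ]
    ring
  rw [← hfinal]
  refine mul_le_mul_of_nonneg_left ?_ (by positivity)
  refine mul_le_mul hIS hexp (Real.exp_pos _).le (by positivity)

end Stmt14

/-- Analyticity of `S_n^{(a,b)}` and of `Δ`, with uniform convergence on
compact sets. -/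
theorem stmt_14 (σ : ℝ → ℝ)
    (hσpos : ∀ x ∈ Set.Icc (0 : ℝ) 1, 0 < σ x)
    (hσAC : sigmaAC σ)
    (hratio : IntegrableOn (fun t => deriv σ t / σ t) (Set.Ioo 0 1)) :
    (∀ a b : ℝ, 0 ≤ a → a ≤ b → b ≤ 1 →
      (∀ n : ℕ, Differentiable ℂ (fun k => S σ a b n k)) ∧
      (∀ K : Set ℂ, IsCompact K →
        TendstoUniformlyOn (fun N k => ∑ n ∈ Finset.range N, S σ a b n k)
          (fun k => ∑' n, S σ a b n k) atTop K)) ∧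
    Differentiable ℂ (Δfun σ) := by
  refine ⟨fun a b ha hab hb => Stmt14.main_ab σ hσpos hσAC hratio a b ha hab hb, ?_⟩
  have h01 := Stmt14.main_ab σ hσpos hσAC hratio 0 1 le_rfl zero_le_one le_rfl
  have hTLU : TendstoLocallyUniformly (fun N k => ∑ n ∈ Finset.range N, S σ 0 1 n k)
      (fun k => ∑' n, S σ 0 1 n k) atTop := by
    rw [tendstoLocallyUniformly_iff_forall_isCompact]
    exact fun K hK => h01.2 K hK
  have hdiffN : ∀ N : ℕ, Differentiable ℂ (fun k => ∑ n ∈ Finset.range N, S σ 0 1 n k) :=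
    fun N => Differentiable.fun_sum fun n _ => h01.1 n
  have hd : DifferentiableOn ℂ (fun k => ∑' n, S σ 0 1 n k) Set.univ := by
    refine (tendstoLocallyUniformlyOn_univ.mpr hTLU).differentiableOn
      (Eventually.of_forall fun N => (hdiffN N).differentiableOn) isOpen_univ
  exact differentiableOn_univ.mp hd
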